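/- Let G be a single unicast index coding problem on [N] and suppose S_1,...,S_P ⊆ [N] form a Q-fold acyclic induced subgraph (AIS) cover of G. Then for every ℓ ≥ minrk_q(G) there exists a valid vector linear index code for G over F_q with message length M = P, broadcast rate ℓ, and locality at most (Q + (P−Q)ℓ)/P; consequently β*_{G,q}( (Q + (P−Q)ℓ)/P ) ≤ ℓ. -/

import Mathlib

/-- A valid vector linear index code for the problem with side information sets `K`:
messages are indexed by pairs `(i, m) : Fin N × Fin M`. -/
def ValidVectorLinearCode {N M ℓ : ℕ} (q : Type) [Field q]
    (K : Fin N → Finset (Fin N))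
    (L : Matrix (Fin N × Fin M) (Fin ℓ) q)
    (R : Fin N → Finset (Fin ℓ)) : Prop :=
  ∀ i : Fin N, ∀ m : Fin M,
    ∃ u : Fin N × Fin M → q,
      (∀ p : Fin N × Fin M, u p ≠ 0 → p.1 ∈ K i) ∧
      u + Pi.single (i, m) 1 ∈
        Submodule.span q ((fun k (p : Fin N × Fin M) => L p k) '' (R i : Set (Fin ℓ)))

/-- The minrank of the side information graph over `F_q`. -/
noncomputable def minrk (q : Type) [Field q] {N : ℕ} (K : Fin N → Finset (Fin N)) : ℕ :=
  sInf {n : ℕ | ∃ A : Matrix (Fin N) (Fin N) q,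
    (∀ i, A i i = 1) ∧ (∀ i j, j ≠ i → j ∉ K i → A j i = 0) ∧ A.rank = n}

/-- The directed graph given by `K` has a directed cycle of length `n` inside `S`. -/
def HasCycleIn {N : ℕ} (K : Fin N → Finset (Fin N)) (S : Finset (Fin N)) (n : ℕ) : Prop :=
  ∃ c : ZMod n → Fin N, (∀ t, c t ∈ S) ∧ Function.Injective c ∧ ∀ t, c (t + 1) ∈ K (c t)

/-- From a "backwards neighbour" function on a finite vertex set we can extract an
injective directed cycle. -/
lemma auxCycle {N : ℕ} {K : Fin N → Finset (Fin N)} {T : Finset (Fin N)}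
    (F : {x : Fin N // x ∈ T} → {x : Fin N // x ∈ T})
    (hF : ∀ z, (z : Fin N) ∈ K (F z)) (z0 : {x : Fin N // x ∈ T}) :
    ∃ n, 0 < n ∧ ∃ c : ZMod n → Fin N,
      (∀ t, c t ∈ T) ∧ Function.Injective c ∧ ∀ t, c (t + 1) ∈ K (c t) := by
  obtain ⟨a, b, hab, heq⟩ := Finite.exists_ne_map_eq_of_infinite (fun k : ℕ => F^[k] z0)
  obtain ⟨a, b, hlt, heq⟩ : ∃ a b : ℕ, a < b ∧ F^[a] z0 = F^[b] z0 := by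
    rcases lt_or_gt_of_ne hab with h | h
    · exact ⟨a, b, h, heq⟩
    · exact ⟨b, a, h, heq.symm⟩
  set y := F^[a] z0 with hy
  have hper : Function.IsPeriodicPt F (b - a) y := by
    show F^[b - a] y = y
    rw [hy, ← Function.iterate_add_apply]
    have hba : b - a + a = b := by omega
    rw [hba]
    exact heq.symm
  have hn : 0 < Function.minimalPeriod F y :=
    hper.minimalPeriod_pos (by omega)
  set n := Function.minimalPeriod F y with hndef
  haveI : NeZero n := ⟨hn.ne'⟩
  have key : ∀ u v : ℕ, u % n = v % n → F^[u] y = F^[v] y := by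
    intro u v h
    rw [← Function.iterate_mod_minimalPeriod_eq (n := u),
      ← Function.iterate_mod_minimalPeriod_eq (n := v), ← hndef, h]
  refine ⟨n, hn, fun t => ((F^[(-t).val] y : {x : Fin N // x ∈ T}) : Fin N),
    fun t => (F^[(-t).val] y).2, ?_, ?_⟩
  · intro t1 t2 h
    have h' : F^[(-t1).val] y = F^[(-t2).val] y := Subtype.ext h
    have hval : (-t1).val = (-t2).val :=
      Function.iterate_injOn_Iio_minimalPeriod (Set.mem_Iio.2 ((-t1).val_lt))
        (Set.mem_Iio.2 ((-t2).val_lt)) h'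
    have : (-t1 : ZMod n) = -t2 := by
      have := congrArg (Nat.cast : ℕ → ZMod n) hval
      rwa [ZMod.natCast_rightInverse _, ZMod.natCast_rightInverse _] at this
    exact neg_injective this
  · intro t
    have hmod : (-t).val % n = ((-(t + 1)).val + 1) % n := by
      have h1 : (((-t).val : ℕ) : ZMod n) = (((-(t + 1)).val + 1 : ℕ) : ZMod n) := by
        rw [Nat.cast_add, Nat.cast_one, ZMod.natCast_rightInverse _,
          ZMod.natCast_rightInverse _]
        ring
      exact (ZMod.natCast_eq_natCast_iff' _ _ _).1 h1
    have hstep : F^[(-t).val] y = F (F^[(-(t + 1)).val] y) := by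
      rw [key _ _ hmod, Function.iterate_succ_apply']
    show ((F^[(-(t + 1)).val] y : {x : Fin N // x ∈ T}) : Fin N)
      ∈ K ((F^[(-t).val] y : {x : Fin N // x ∈ T}) : Fin N)
    rw [hstep]
    exact hF _


/-- Columns of a fitting matrix indexed by an acyclic vertex subset form a
linearly independent family: core computation. -/
lemma auxIndep {q : Type} [Field q] {N : ℕ} (K : Fin N → Finset (Fin N))
    (A : Matrix (Fin N) (Fin N) q) (hA1 : ∀ i, A i i = 1)
    (hA0 : ∀ i j, j ≠ i → j ∉ K i → A j i = 0)
    (T : Finset (Fin N)) (hacyc : ∀ n, 0 < n → ¬ HasCycleIn K T n)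
    (g : Fin N → q) (hsupp : ∀ i, g i ≠ 0 → i ∈ T)
    (hsum : ∀ j, ∑ i, g i * A j i = 0) : ∀ i, g i = 0 := by
  classical
  by_contra hc
  push_neg at hc
  obtain ⟨i0, hi0⟩ := hc
  set T' : Finset (Fin N) := Finset.univ.filter (fun i => g i ≠ 0) with hT'
  have hmemT' : ∀ i, i ∈ T' ↔ g i ≠ 0 := by intro i; simp [hT']
  have hj : ∀ j ∈ T', ∃ i, i ∈ T' ∧ i ≠ j ∧ j ∈ K i := by
    intro j hjT
    by_contra hcon
    push_neg at hcon
    have h0 : ∑ i ∈ Finset.univ.erase j, g i * A j i = 0 := by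
      apply Finset.sum_eq_zero
      intro i hi
      have hij : i ≠ j := (Finset.mem_erase.1 hi).1
      by_cases hgi : g i = 0
      · simp [hgi]
      · rw [hA0 i j hij.symm (hcon i ((hmemT' i).2 hgi) hij), mul_zero]
    have h1 := hsum j
    rw [← Finset.add_sum_erase _ _ (Finset.mem_univ j), h0, add_zero, hA1 j,
      mul_one] at h1
    exact (hmemT' j).1 hjT h1
  have hne : i0 ∈ T' := (hmemT' i0).2 hi0
  let F : {x : Fin N // x ∈ T'} → {x : Fin N // x ∈ T'} :=
    fun z => ⟨(hj z z.2).choose, ((hj z z.2).choose_spec).1⟩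
  have hF : ∀ z, (z : Fin N) ∈ K (F z) := fun z => ((hj z z.2).choose_spec).2.2
  obtain ⟨n, hn, c, hcT, hinj, hcyc⟩ := auxCycle F hF ⟨i0, hne⟩
  exact hacyc n hn ⟨c, fun t => hsupp _ ((hmemT' _).1 (hcT t)), hinj, hcyc⟩

lemma auxSetIndep {q : Type} [Field q] {N : ℕ} (K : Fin N → Finset (Fin N))
    (A : Matrix (Fin N) (Fin N) q) (hA1 : ∀ i, A i i = 1)
    (hA0 : ∀ i j, j ≠ i → j ∉ K i → A j i = 0)
    (T : Finset (Fin N)) (hacyc : ∀ n, 0 < n → ¬ HasCycleIn K T n) :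
    LinearIndependent q ((↑) : (Set.image A.transpose (T : Set (Fin N)) : Set (Fin N → q)) → (Fin N → q)) := by
  classical
  have hfam : LinearIndependent q (fun x : {i : Fin N // i ∈ T} => A.transpose (x : Fin N)) := by
    rw [Fintype.linearIndependent_iff]
    intro g hg
    set g' : Fin N → q := fun i => if h : i ∈ T then g ⟨i, h⟩ else 0 with hg'
    have hsupp : ∀ i, g' i ≠ 0 → i ∈ T := by
      intro i hi
      by_contra h
      exact hi (by simp [hg', h])
    have hsum0 : ∑ i, g' i • A.transpose i = 0 := by
      calc ∑ i, g' i • A.transpose i = ∑ i ∈ T, g' i • A.transpose i := by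
            refine (Finset.sum_subset (Finset.subset_univ T) ?_).symm
            intro x _ hx
            simp [hg', hx]
        _ = ∑ x ∈ T.attach, g' (x : Fin N) • A.transpose (x : Fin N) := (Finset.sum_attach T _).symm
        _ = ∑ x ∈ T.attach, g x • A.transpose (x : Fin N) := by
            refine Finset.sum_congr rfl ?_
            intro x _
            simp [hg', x.2]
        _ = 0 := by rw [← hg]; rw [Finset.univ_eq_attach]
    have hsum : ∀ j, ∑ i, g' i * A j i = 0 := by
      intro j
      have := congrFun hsum0 j
      simpa [Finset.sum_apply, Matrix.transpose_apply] using this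
    have hz := auxIndep K A hA1 hA0 T hacyc g' hsupp hsum
    intro x
    have := hz (x : Fin N)
    simpa [hg', x.2] using this
  have h2 : LinearIndepOn q id (Set.range (fun x : {i : Fin N // i ∈ T} => A.transpose (x : Fin N))) :=
    (linearIndepOn_id_range_iff hfam.injective).mpr hfam
  have himg : (Set.image A.transpose (T : Set (Fin N)) : Set (Fin N → q)) =
      Set.range (fun x : {i : Fin N // i ∈ T} => A.transpose (x : Fin N)) := by
    ext w
    constructor
    · rintro ⟨i, hi, rfl⟩
      exact ⟨⟨i, hi⟩, rfl⟩
    · rintro ⟨x, rfl⟩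
      exact ⟨(x : Fin N), x.2, rfl⟩
  rw [himg]
  exact h2


/-- Padding map: embed a length-`N` vector into block `m` of `Fin N × Fin P`. -/
def padL (q : Type) [Field q] {N P : ℕ} (m : Fin P) :
    (Fin N → q) →ₗ[q] (Fin N × Fin P → q) where
  toFun w := fun x => if x.2 = m then w x.1 else 0
  map_add' := by
    intro w1 w2
    funext x
    by_cases h : x.2 = m <;> simp [h]
  map_smul' := by
    intro c w
    funext x
    by_cases h : x.2 = m <;> simp [h]

/-- Given an independent family of columns indexed by `T` and a column space of
dimension at most `ℓ`, produce a length-`ℓ` block containing the `T`-columns and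
spanning the column space. -/
lemma exists_block {q : Type} [Field q] {N ℓ : ℕ} (hℓ : 0 < ℓ)
    (col : Fin N → (Fin N → q)) (T : Finset (Fin N))
    (hindep : LinearIndependent q
      ((↑) : (Set.image col (T : Set (Fin N)) : Set (Fin N → q)) → (Fin N → q)))
    (hrk : Module.finrank q (Submodule.span q (Set.range col)) ≤ ℓ) :
    ∃ (β : Fin ℓ → (Fin N → q)) (σ : Fin N → Fin ℓ),
      (∀ i ∈ T, β (σ i) = col i) ∧
      ∀ i, col i ∈ Submodule.span q (Set.range β) := by
  classical
  set s : Set (Fin N → q) := Set.image col (T : Set (Fin N)) with hs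
  have hst : s ⊆ Set.range col := Set.image_subset_range _ _
  have hindep' : LinearIndepOn q id s := hindep
  set b : Set (Fin N → q) := hindep'.extend hst with hb
  have hsb : s ⊆ b := hindep'.subset_extend hst
  have hbt : b ⊆ Set.range col := hindep'.extend_subset hst
  have hspan : Set.range col ⊆ ↑(Submodule.span q b) := hindep'.subset_span_extend hst
  have hli : LinearIndependent q ((↑) : b → (Fin N → q)) :=
    hindep'.linearIndepOn_extend hst
  have hbf : b.Finite := (Set.finite_range col).subset hbt
  haveI : Fintype b := hbf.fintype
  have hmemV : ∀ x ∈ b, x ∈ Submodule.span q (Set.range col) := fun x hx =>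
    Submodule.subset_span (hbt hx)
  have hv : LinearIndependent q
      (fun x : b => (⟨(x : Fin N → q), hmemV _ x.2⟩ :
        ↥(Submodule.span q (Set.range col)))) := by
    apply LinearIndependent.of_comp (Submodule.span q (Set.range col)).subtype
    exact hli
  have hcard : Fintype.card b ≤ ℓ := le_trans hv.fintype_card_le_finrank hrk
  set e := Fintype.equivFin b with he
  set β : Fin ℓ → (Fin N → q) := fun k =>
    if h : (k : ℕ) < Fintype.card b then ((e.symm ⟨k, h⟩ : b) : Fin N → q) else 0
    with hβ
  have hkey : ∀ (x) (hx : x ∈ b), β (Fin.castLE hcard (e ⟨x, hx⟩)) = x := by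
    intro x hx
    have hlt : ((Fin.castLE hcard (e ⟨x, hx⟩) : Fin ℓ) : ℕ) < Fintype.card b := by
      simpa using (e ⟨x, hx⟩).isLt
    rw [hβ]
    dsimp only
    rw [dif_pos hlt]
    have hfin : (⟨((Fin.castLE hcard (e ⟨x, hx⟩) : Fin ℓ) : ℕ), hlt⟩ :
        Fin (Fintype.card b)) = e ⟨x, hx⟩ := by
      apply Fin.ext
      simp
    rw [hfin, Equiv.symm_apply_apply]
  refine ⟨β, fun i => if h : col i ∈ b then Fin.castLE hcard (e ⟨col i, h⟩)
    else ⟨0, hℓ⟩, ?_, ?_⟩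
  · intro i hi
    have h : col i ∈ b := hsb ⟨i, hi, rfl⟩
    simp only [dif_pos h]
    exact hkey _ h
  · intro i
    have h1 : col i ∈ Submodule.span q b := hspan (Set.mem_range_self i)
    have h2 : Submodule.span q b ≤ Submodule.span q (Set.range β) := by
      apply Submodule.span_mono
      intro x hx
      exact ⟨Fin.castLE hcard (e ⟨x, hx⟩), hkey _ hx⟩
    exact h2 h1


/-- If `S_1,…,S_P` form a `Q`-fold acyclic induced subgraph cover of `G`,
then for every `ℓ ≥ minrk_q(G)` there is a valid vector linear index code for `G` over `F_q`
with message length `M = P`, broadcast rate `ℓ` (codelength `P·ℓ`), and locality at most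
`(Q + (P−Q)ℓ)/P`; consequently `β*_{G,q}((Q + (P−Q)ℓ)/P) ≤ ℓ`. -/
theorem ais_cover_achievability
    {N P Q : ℕ} (q : Type) [Field q] [Fintype q]
    (K : Fin N → Finset (Fin N)) (hK : ∀ i, i ∉ K i)
    (S : Fin P → Finset (Fin N))
    (hP : 0 < P)
    (hcover : ∀ i : Fin N, ∃ p, i ∈ S p)
    (hQfold : ∀ i : Fin N, Q ≤ (Finset.univ.filter fun p => i ∈ S p).card)
    (hacyclic : ∀ p : Fin P, ∀ n, 0 < n → ¬ HasCycleIn K (S p) n)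
    (ℓ : ℕ) (hℓ : minrk q K ≤ ℓ) :
    (∃ (L : Matrix (Fin N × Fin P) (Fin (P * ℓ)) q) (R : Fin N → Finset (Fin (P * ℓ))),
        ValidVectorLinearCode q K L R ∧ ∀ i, (R i).card ≤ Q + (P - Q) * ℓ) ∧
    sInf {β : ℝ | ∃ (M ℓ' : ℕ) (L : Matrix (Fin N × Fin M) (Fin ℓ') q)
        (R : Fin N → Finset (Fin ℓ')),
        0 < M ∧ ValidVectorLinearCode q K L R ∧
        (∀ i, ((R i).card : ℝ) / M ≤ ((Q + (P - Q) * ℓ : ℕ) : ℝ) / P) ∧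
        β = (ℓ' : ℝ) / M}
      ≤ ℓ := by
  classical
  have hmem : minrk q K ∈ {n : ℕ | ∃ A : Matrix (Fin N) (Fin N) q,
      (∀ i, A i i = 1) ∧ (∀ i j, j ≠ i → j ∉ K i → A j i = 0) ∧ A.rank = n} := by
    apply Nat.sInf_mem
    exact ⟨(1 : Matrix (Fin N) (Fin N) q).rank, 1, fun i => Matrix.one_apply_eq i,
      fun i j hji _ => Matrix.one_apply_ne hji, rfl⟩
  obtain ⟨A, hA1, hA0, hArk⟩ := hmem
  have hAr : A.rank ≤ ℓ := by rw [hArk]; exact hℓ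
  have part1 : ∃ (L : Matrix (Fin N × Fin P) (Fin (P * ℓ)) q)
      (R : Fin N → Finset (Fin (P * ℓ))),
      ValidVectorLinearCode q K L R ∧ ∀ i, (R i).card ≤ Q + (P - Q) * ℓ := by
    by_cases hN : N = 0
    · subst hN
      exact ⟨0, fun _ => ∅, fun i => i.elim0, fun i => i.elim0⟩
    · have hNpos : 0 < N := Nat.pos_of_ne_zero hN
      have hℓ1 : 0 < ℓ := by
        by_contra hℓ0
        push_neg at hℓ0
        have hr0 : A.rank = 0 := by omega
        rw [Matrix.rank_eq_finrank_span_cols] at hr0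
        have hbot := Submodule.finrank_eq_zero.mp hr0
        have hc : A.transpose ⟨0, hNpos⟩ ∈ Submodule.span q (Set.range A.transpose) :=
          Submodule.subset_span (Set.mem_range_self _)
        rw [show Set.range A.transpose = Set.range A.col from rfl, hbot] at hc
        have hz : A.transpose ⟨0, hNpos⟩ = 0 := (Submodule.mem_bot q).1 hc
        have h1 := congrFun hz ⟨0, hNpos⟩
        rw [Matrix.transpose_apply, hA1] at h1
        exact one_ne_zero h1
      have hrk : Module.finrank q (Submodule.span q (Set.range A.transpose)) ≤ ℓ := by
        rw [show Set.range A.transpose = Set.range A.col from rfl, ← Matrix.rank_eq_finrank_span_cols]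
        exact hAr
      have hblocks : ∀ p : Fin P, ∃ (β : Fin ℓ → (Fin N → q)) (σ : Fin N → Fin ℓ),
          (∀ i ∈ S p, β (σ i) = A.transpose i) ∧
          ∀ i, A.transpose i ∈ Submodule.span q (Set.range β) := fun p =>
        exists_block hℓ1 A.transpose (S p)
          (auxSetIndep K A hA1 hA0 (S p) (hacyclic p)) hrk
      choose β σ hβσ hβspan using hblocks
      set ep : Fin P × Fin ℓ ≃ Fin (P * ℓ) := finProdFinEquiv with hep
      set L : Matrix (Fin N × Fin P) (Fin (P * ℓ)) q := fun x k =>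
        if x.2 = (ep.symm k).1 then β (ep.symm k).1 (ep.symm k).2 x.1 else 0 with hL
      set R : Fin N → Finset (Fin (P * ℓ)) := fun i =>
        Finset.image ep (Finset.univ.filter fun pt : Fin P × Fin ℓ =>
          i ∈ S pt.1 → pt.2 = σ pt.1 i) with hR
      have hcolL : ∀ (p : Fin P) (t : Fin ℓ),
          (fun x : Fin N × Fin P => L x (ep (p, t))) = padL q p (β p t) := by
        intro p t
        funext x
        rw [hL]
        dsimp only
        rw [Equiv.symm_apply_apply]
        rfl
      refine ⟨L, R, ?_, ?_⟩
      · intro i m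
        refine ⟨padL q m (A.transpose i) - Pi.single (i, m) 1, ?_, ?_⟩
        · intro x hx
          by_cases hxe : x = (i, m)
          · exfalso
            apply hx
            subst hxe
            simp [padL, Matrix.transpose_apply, hA1]
          · have hs0 : (Pi.single (i, m) 1 : Fin N × Fin P → q) x = 0 :=
              Pi.single_eq_of_ne hxe 1
            have hux : (padL q m (A.transpose i) : Fin N × Fin P → q) x ≠ 0 := by
              intro h0
              apply hx
              simp [h0, hs0]
            by_cases hx2 : x.2 = m
            · have hval : A x.1 i ≠ 0 := by
                simpa [padL, hx2, Matrix.transpose_apply] using hux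
              have hx1 : x.1 ≠ i := fun h1 => hxe (Prod.ext h1 hx2)
              by_contra hKc
              exact hval (hA0 i x.1 hx1 hKc)
            · exact absurd (by simp [padL, hx2]) hux
        · have heq : padL q m (A.transpose i) - Pi.single (i, m) 1 + Pi.single (i, m) 1
              = padL q m (A.transpose i) := by ring
          rw [heq]
          by_cases hiS : i ∈ S m
          · apply Submodule.subset_span
            refine ⟨ep (m, σ m i), ?_, ?_⟩
            · exact Finset.mem_coe.2 (Finset.mem_image.2 ⟨(m, σ m i),
                Finset.mem_filter.2 ⟨Finset.mem_univ _, fun _ => rfl⟩, rfl⟩)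
            · have h := hcolL m (σ m i)
              rw [hβσ m i hiS] at h
              exact h
          · have h1 : A.transpose i ∈ Submodule.span q (Set.range (β m)) := hβspan m i
            have h2 : padL q m (A.transpose i) ∈
                Submodule.map (padL q m) (Submodule.span q (Set.range (β m))) :=
              Submodule.mem_map_of_mem h1
            rw [Submodule.map_span] at h2
            refine Submodule.span_mono ?_ h2
            rintro w ⟨_, ⟨t, rfl⟩, rfl⟩
            refine ⟨ep (m, t), ?_, ?_⟩
            · exact Finset.mem_coe.2 (Finset.mem_image.2 ⟨(m, t),
                Finset.mem_filter.2 ⟨Finset.mem_univ _, fun h => absurd h hiS⟩, rfl⟩)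
            · exact hcolL m t
      · intro i
        rw [hR]
        dsimp only
        rw [Finset.card_image_of_injective _ ep.injective]
        have hsum : (Finset.univ.filter fun pt : Fin P × Fin ℓ =>
            i ∈ S pt.1 → pt.2 = σ pt.1 i).card
            = ∑ p : Fin P, (if i ∈ S p then 1 else ℓ) := by
          rw [Finset.card_filter, Fintype.sum_prod_type]
          refine Finset.sum_congr rfl ?_
          intro p _
          by_cases hp : i ∈ S p
          · simp [hp]
          · simp [hp]
        rw [hsum]
        have hQi : Q ≤ (Finset.univ.filter fun p : Fin P => i ∈ S p).card := hQfold i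
        have hQiP : (Finset.univ.filter fun p : Fin P => i ∈ S p).card ≤ P := by
          calc (Finset.univ.filter fun p : Fin P => i ∈ S p).card
              ≤ (Finset.univ : Finset (Fin P)).card := Finset.card_filter_le _ _
            _ = P := by simp
        have hneg : (Finset.univ.filter fun p : Fin P => ¬ i ∈ S p).card
            = P - (Finset.univ.filter fun p : Fin P => i ∈ S p).card := by
          have h := Finset.card_filter_add_card_filter_not
            (s := (Finset.univ : Finset (Fin P))) (p := fun p => i ∈ S p)
          simp only [Finset.card_univ, Fintype.card_fin] at h
          omega
        have hsplit : ∑ p : Fin P, (if i ∈ S p then 1 else ℓ)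
            = (Finset.univ.filter fun p : Fin P => i ∈ S p).card * 1
              + (P - (Finset.univ.filter fun p : Fin P => i ∈ S p).card) * ℓ := by
          rw [Finset.sum_ite, Finset.sum_const, Finset.sum_const, hneg]
          simp [mul_comm]
        rw [hsplit]
        have key : ∀ Qi : ℕ, Q ≤ Qi → Qi ≤ P →
            Qi * 1 + (P - Qi) * ℓ ≤ Q + (P - Q) * ℓ := by
          intro Qi h1 h2
          obtain ⟨a, rfl⟩ := Nat.exists_eq_add_of_le h1
          obtain ⟨c, rfl⟩ := Nat.exists_eq_add_of_le h2
          have h3 : Q + a + c - (Q + a) = c := by omega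
          have h4 : Q + a + c - Q = a + c := by omega
          rw [h3, h4, mul_one, add_mul]
          have h5 : a ≤ a * ℓ := Nat.le_mul_of_pos_right a hℓ1
          linarith
        exact key _ hQi hQiP
  obtain ⟨L, R, hval, hcard⟩ := part1
  have hP' : (0 : ℝ) < P := by exact_mod_cast hP
  refine ⟨⟨L, R, hval, hcard⟩, ?_⟩
  apply csInf_le
  · refine ⟨0, ?_⟩
    rintro β ⟨M, ℓ', L', R', hM, _, _, rfl⟩
    positivity
  · refine ⟨P, P * ℓ, L, R, hP, hval, ?_, ?_⟩
    · intro i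
      have hle : ((R i).card : ℝ) ≤ ((Q + (P - Q) * ℓ : ℕ) : ℝ) := by
        exact_mod_cast hcard i
      exact div_le_div_of_nonneg_right hle hP'.le
    · rw [Nat.cast_mul, mul_div_cancel_left₀ _ (ne_of_gt hP')]
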